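/- arXiv:2211.09917 — 4 statements merged into one kernel-verified Lean document; each statement's English description precedes it below -/
import Mathlib

section
/- Let P ∈ ℝ^{n×n} be symmetric positive definite and write ‖y‖_P² = yᵀPy. Let f : ℝⁿ → ℝⁿ with f(0) = 0, g : ℝⁿ → ℝ^{n×m}, R(x) symmetric positive definite, 0 < γ ≤ 1, M(x) = R(x) + γ g(x)ᵀPg(x), and Q(x) = ‖x‖_P² − γ‖f(x)‖_P² + γ² f(x)ᵀPg(x) M(x)⁻¹ g(x)ᵀPf(x). If there is L > 0 such that ‖f(x)‖_P² ≤ L‖x‖_P² for all x ∈ ℝⁿ and γ ≤ 1/L, then Q(x) ≥ 0 for all x ∈ ℝⁿ and Q(0) = 0. -/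
open Matrix

lemma posSemidef_smul' {m : ℕ} {A : Matrix (Fin m) (Fin m) ℝ} (hA : A.PosSemidef)
    {c : ℝ} (hc : 0 ≤ c) : (c • A).PosSemidef := by
  refine .of_dotProduct_mulVec_nonneg ?_ (fun x => ?_)
  · rw [Matrix.IsHermitian, conjTranspose_smul, hA.1.eq, star_trivial]
  · rw [smul_mulVec, dotProduct_smul, smul_eq_mul]
    exact mul_nonneg hc (hA.dotProduct_mulVec_nonneg x)

/-- Nonnegativity of the discrete-time inverse-optimal state weight (Theorem 1):
if `‖f x‖_P² ≤ L ‖x‖_P²` for all `x` and `γ ≤ 1/L`, then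
`Q x = ‖x‖_P² - γ‖f x‖_P² + γ² fᵀPg M⁻¹ gᵀPf ≥ 0` and `Q 0 = 0`. -/
theorem discrete_Q_nonneg
    {n m : ℕ} (P : Matrix (Fin n) (Fin n) ℝ) (hP : P.PosDef)
    (f : (Fin n → ℝ) → (Fin n → ℝ)) (hf0 : f 0 = 0)
    (g : (Fin n → ℝ) → Matrix (Fin n) (Fin m) ℝ)
    (R : (Fin n → ℝ) → Matrix (Fin m) (Fin m) ℝ)
    (hR : ∀ x, (R x).PosDef)
    (γ : ℝ) (hγ0 : 0 < γ) (hγ1 : γ ≤ 1)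
    (M : (Fin n → ℝ) → Matrix (Fin m) (Fin m) ℝ)
    (hM : ∀ x, M x = R x + γ • ((g x)ᵀ * P * g x))
    (Q : (Fin n → ℝ) → ℝ)
    (hQ : ∀ x, Q x = x ⬝ᵥ (P *ᵥ x) - γ * (f x ⬝ᵥ (P *ᵥ f x))
        + γ ^ 2 * (f x ⬝ᵥ (P *ᵥ (g x *ᵥ ((M x)⁻¹ *ᵥ ((g x)ᵀ *ᵥ (P *ᵥ f x)))))))
    (L : ℝ) (hL : 0 < L)
    (hLip : ∀ x : Fin n → ℝ, f x ⬝ᵥ (P *ᵥ f x) ≤ L * (x ⬝ᵥ (P *ᵥ x)))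
    (hγL : γ ≤ 1 / L) :
    (∀ x : Fin n → ℝ, 0 ≤ Q x) ∧ Q 0 = 0 := by
  -- M x is positive definite, hence so is its inverse
  have hgPg : ∀ x, ((g x)ᵀ * P * g x).PosSemidef := by
    intro x
    have := hP.posSemidef.conjTranspose_mul_mul_same (g x)
    simpa [conjTranspose_eq_transpose_of_trivial] using this
  have hMpd : ∀ x, (M x).PosDef := by
    intro x
    rw [hM x]
    exact (hR x).add_posSemidef (posSemidef_smul' (hgPg x) hγ0.le)
  have hMinv : ∀ x, ((M x)⁻¹).PosSemidef := fun x => (hMpd x).inv.posSemidef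
  -- third term is nonneg
  have hterm : ∀ x, 0 ≤ f x ⬝ᵥ (P *ᵥ (g x *ᵥ ((M x)⁻¹ *ᵥ ((g x)ᵀ *ᵥ (P *ᵥ f x))))) := by
    intro x
    set v : Fin m → ℝ := (g x)ᵀ *ᵥ (P *ᵥ f x) with hv
    have hPsymm : Pᵀ = P := by
      rw [← conjTranspose_eq_transpose_of_trivial]; exact hP.1
    have key : f x ⬝ᵥ (P *ᵥ (g x *ᵥ ((M x)⁻¹ *ᵥ v))) = v ⬝ᵥ ((M x)⁻¹ *ᵥ v) := by
      rw [dotProduct_mulVec, dotProduct_mulVec, hv, mulVec_transpose,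
        ← hPsymm, mulVec_transpose, hPsymm]
    rw [key]
    have := (hMinv x).dotProduct_mulVec_nonneg v
    simpa using this
  constructor
  · intro x
    rw [hQ x]
    have h1 : γ * (f x ⬝ᵥ (P *ᵥ f x)) ≤ x ⬝ᵥ (P *ᵥ x) := by
      have hfx := hLip x
      have hxP : 0 ≤ x ⬝ᵥ (P *ᵥ x) := by simpa using hP.posSemidef.dotProduct_mulVec_nonneg x
      have hγL' : γ * L ≤ 1 := by
        rw [div_eq_mul_inv, one_mul] at hγL
        calc γ * L ≤ L⁻¹ * L := by nlinarith
          _ = 1 := inv_mul_cancel₀ hL.ne'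
      calc γ * (f x ⬝ᵥ (P *ᵥ f x)) ≤ γ * (L * (x ⬝ᵥ (P *ᵥ x))) := by nlinarith
        _ = (γ * L) * (x ⬝ᵥ (P *ᵥ x)) := by ring
        _ ≤ 1 * (x ⬝ᵥ (P *ᵥ x)) := by nlinarith
        _ = x ⬝ᵥ (P *ᵥ x) := one_mul _
    have h2 := hterm x
    nlinarith [sq_nonneg γ]
  · rw [hQ 0, hf0]
    simp
end

section
/- Let P ∈ ℝ^{n×n} be symmetric positive definite, R(x) ∈ ℝ^{m×m} symmetric positive definite, γ = 1, M(x) = R(x) + g(x)ᵀPg(x), u*(x) = −M(x)⁻¹ g(x)ᵀPf(x), Q(x) = xᵀPx − f(x)ᵀPf(x) + f(x)ᵀPg(x)M(x)⁻¹g(x)ᵀPf(x), and let x⁺ = f(x) + g(x)u*(x) be the closed-loop successor state. Then (x⁺)ᵀPx⁺ = xᵀPx − Q(x) − u*(x)ᵀR(x)u*(x); in particular (x⁺)ᵀPx⁺ ≤ xᵀPx − Q(x), so if Q is positive definite the value function V(x) = xᵀPx strictly decreases along closed-loop trajectories away from the origin. -/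
open Matrix

private lemma dot_shift {n m : ℕ} (P : Matrix (Fin n) (Fin n) ℝ) (hP : Pᵀ = P)
    (A : Matrix (Fin n) (Fin m) ℝ) (a : Fin n → ℝ) (v : Fin m → ℝ) :
    a ⬝ᵥ (P *ᵥ (A *ᵥ v)) = (Aᵀ *ᵥ (P *ᵥ a)) ⬝ᵥ v := by
  rw [mulVec_mulVec, dotProduct_mulVec, ← mulVec_transpose, transpose_mul, hP,
    ← mulVec_mulVec]

/-- Remark 1 made precise: for γ = 1, the closed-loop successor state
`x⁺ = f x + g x u* x` satisfies `(x⁺)ᵀPx⁺ = xᵀPx - Q x - u*ᵀR u*`, hence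
`(x⁺)ᵀPx⁺ ≤ xᵀPx - Q x`; if `Q` is positive definite, `V x = xᵀPx` strictly
decreases along closed-loop trajectories away from the origin. -/
theorem discrete_lyapunov_decrease
    {n m : ℕ} (P : Matrix (Fin n) (Fin n) ℝ) (hP : P.PosDef)
    (f : (Fin n → ℝ) → (Fin n → ℝ))
    (g : (Fin n → ℝ) → Matrix (Fin n) (Fin m) ℝ)
    (R : (Fin n → ℝ) → Matrix (Fin m) (Fin m) ℝ)
    (hR : ∀ x, (R x).PosDef)
    (M : (Fin n → ℝ) → Matrix (Fin m) (Fin m) ℝ)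
    (hM : ∀ x, M x = R x + (g x)ᵀ * P * g x)
    (ustar : (Fin n → ℝ) → (Fin m → ℝ))
    (hu : ∀ x, ustar x = -((M x)⁻¹ *ᵥ ((g x)ᵀ *ᵥ (P *ᵥ f x))))
    (Q : (Fin n → ℝ) → ℝ)
    (hQ : ∀ x, Q x = x ⬝ᵥ (P *ᵥ x) - f x ⬝ᵥ (P *ᵥ f x)
        + f x ⬝ᵥ (P *ᵥ (g x *ᵥ ((M x)⁻¹ *ᵥ ((g x)ᵀ *ᵥ (P *ᵥ f x))))))
    (xplus : (Fin n → ℝ) → (Fin n → ℝ))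
    (hxplus : ∀ x, xplus x = f x + g x *ᵥ ustar x) :
    (∀ x : Fin n → ℝ,
        xplus x ⬝ᵥ (P *ᵥ xplus x)
          = x ⬝ᵥ (P *ᵥ x) - Q x - ustar x ⬝ᵥ (R x *ᵥ ustar x)) ∧
    (∀ x : Fin n → ℝ, xplus x ⬝ᵥ (P *ᵥ xplus x) ≤ x ⬝ᵥ (P *ᵥ x) - Q x) ∧
    ((∀ x : Fin n → ℝ, x ≠ 0 → 0 < Q x) →
      ∀ x : Fin n → ℝ, x ≠ 0 → xplus x ⬝ᵥ (P *ᵥ xplus x) < x ⬝ᵥ (P *ᵥ x)) := by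
  have hPsymm : Pᵀ = P := by
    have := hP.isHermitian
    rwa [IsHermitian, conjTranspose_eq_transpose_of_trivial] at this
  have symdot : ∀ (a b : Fin n → ℝ), a ⬝ᵥ (P *ᵥ b) = b ⬝ᵥ (P *ᵥ a) := fun a b => by
    rw [dotProduct_mulVec, ← mulVec_transpose, hPsymm, dotProduct_comm]
  have key : ∀ x : Fin n → ℝ,
      xplus x ⬝ᵥ (P *ᵥ xplus x)
        = x ⬝ᵥ (P *ᵥ x) - Q x - ustar x ⬝ᵥ (R x *ᵥ ustar x) := by
    intro x
    have hgPg : ((g x)ᵀ * P * g x).PosSemidef := by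
      have := hP.posSemidef.conjTranspose_mul_mul_same (g x)
      rwa [conjTranspose_eq_transpose_of_trivial] at this
    have hMpd : (M x).PosDef := by
      rw [hM]; exact (hR x).add_posSemidef hgPg
    have hMdet : IsUnit (M x).det := isUnit_iff_ne_zero.mpr hMpd.det_pos.ne'
    have hinv1 : M x * (M x)⁻¹ = 1 := mul_nonsing_inv _ hMdet
    rw [hxplus x, hQ x, hu x]
    set w : Fin m → ℝ := (g x)ᵀ *ᵥ (P *ᵥ f x) with hw
    set v : Fin m → ℝ := (M x)⁻¹ *ᵥ w with hv
    have e4 : (M x) *ᵥ v = w := by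
      rw [hv, mulVec_mulVec, hinv1, one_mulVec]
    have F1 : f x ⬝ᵥ (P *ᵥ (g x *ᵥ v)) = w ⬝ᵥ v := by
      rw [dot_shift P hPsymm, ← hw]
    have F2 : (g x *ᵥ v) ⬝ᵥ (P *ᵥ f x) = w ⬝ᵥ v := by
      rw [symdot]; exact F1
    have hMR : (g x)ᵀ * P * g x = M x - R x := by
      rw [hM x, add_sub_cancel_left]
    have F3 : (g x *ᵥ v) ⬝ᵥ (P *ᵥ (g x *ᵥ v)) = w ⬝ᵥ v - v ⬝ᵥ (R x *ᵥ v) := by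
      rw [dot_shift P hPsymm, mulVec_mulVec, mulVec_mulVec, hMR, sub_mulVec,
        sub_dotProduct, e4, dotProduct_comm w v, dotProduct_comm (R x *ᵥ v) v]
    simp only [mulVec_neg, mulVec_add, dotProduct_add, add_dotProduct, dotProduct_neg,
      neg_dotProduct, neg_neg]
    rw [F1, F2, F3]
    ring
  refine ⟨key, fun x => ?_, fun hQpos x hx => ?_⟩
  · have h := key x
    have hnn : 0 ≤ ustar x ⬝ᵥ (R x *ᵥ ustar x) := (hR x).posSemidef.dotProduct_mulVec_nonneg (ustar x)
    linarith
  · have h := key x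
    have hnn : 0 ≤ ustar x ⬝ᵥ (R x *ᵥ ustar x) := (hR x).posSemidef.dotProduct_mulVec_nonneg (ustar x)
    have := hQpos x hx
    linarith
end

section
/- Let P ∈ ℝ^{n×n} be symmetric positive definite with ‖a‖_P = √(aᵀPa), let f : ℝⁿ → ℝⁿ, g : ℝⁿ → ℝ^{n×m}, R(x) symmetric positive definite, γ ≥ 0, and Q(x) = γ xᵀPx − 2xᵀPf(x) + xᵀPg(x)R(x)⁻¹g(x)ᵀPx. If there is L > 0 with ‖f(x)‖_P ≤ L‖x‖_P for all x (in particular f(0) = 0) and γ ≥ 2L, then Q(x) ≥ (γ − 2L)‖x‖_P² ≥ 0 for all x ∈ ℝⁿ, and Q(0) = 0. -/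
open Matrix

lemma psd_dot_nonneg {n : ℕ} {M : Matrix (Fin n) (Fin n) ℝ} (hM : M.PosSemidef)
    (x : Fin n → ℝ) : 0 ≤ x ⬝ᵥ (M *ᵥ x) := by
  simpa using hM.re_dotProduct_nonneg x

lemma cs {n : ℕ} {P : Matrix (Fin n) (Fin n) ℝ} (hP : P.PosDef)
    (x y : Fin n → ℝ) :
    x ⬝ᵥ (P *ᵥ y) ≤ Real.sqrt (x ⬝ᵥ (P *ᵥ x)) * Real.sqrt (y ⬝ᵥ (P *ᵥ y)) := by
  set a := x ⬝ᵥ (P *ᵥ x)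
  set b := x ⬝ᵥ (P *ᵥ y)
  set c := y ⬝ᵥ (P *ᵥ y)
  have ha : 0 ≤ a := psd_dot_nonneg hP.posSemidef x
  have hc : 0 ≤ c := psd_dot_nonneg hP.posSemidef y
  have hPt : Pᵀ = P := by
    have := hP.isHermitian.eq
    simpa [Matrix.conjTranspose_eq_transpose_of_trivial] using this
  have hsym : y ⬝ᵥ (P *ᵥ x) = b := by
    rw [dotProduct_mulVec, ← mulVec_transpose, hPt, dotProduct_comm]
  have key : ∀ t : ℝ, 0 ≤ c * (t * t) + (2 * b) * t + a := by
    intro t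
    have := psd_dot_nonneg hP.posSemidef (x + t • y)
    have expand : (x + t • y) ⬝ᵥ (P *ᵥ (x + t • y))
        = c * (t * t) + (2 * b) * t + a := by
      simp only [mulVec_add, mulVec_smul, dotProduct_add, add_dotProduct,
        smul_dotProduct, dotProduct_smul, smul_eq_mul, hsym]
      ring
    linarith [expand ▸ this]
  have hd := discrim_le_zero key
  rw [discrim] at hd
  have hb2 : b * b ≤ a * c := by nlinarith
  calc b ≤ |b| := le_abs_self b
    _ = Real.sqrt (b * b) := by rw [← abs_mul_abs_self b, Real.sqrt_mul_self (abs_nonneg b)]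
    _ ≤ Real.sqrt (a * c) := Real.sqrt_le_sqrt hb2
    _ = Real.sqrt a * Real.sqrt c := Real.sqrt_mul ha c

/-- Nonnegativity of the continuous-time inverse-optimal state weight (Theorem 2):
if `‖f x‖_P ≤ L‖x‖_P` for all `x` and `γ ≥ 2L`, then
`Q x = γ xᵀPx - 2xᵀPf + xᵀPg R⁻¹ gᵀPx ≥ (γ - 2L)‖x‖_P² ≥ 0` and `Q 0 = 0`. -/
theorem continuous_Q_nonneg
    {n m : ℕ} (P : Matrix (Fin n) (Fin n) ℝ) (hP : P.PosDef)
    (f : (Fin n → ℝ) → (Fin n → ℝ))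
    (g : (Fin n → ℝ) → Matrix (Fin n) (Fin m) ℝ)
    (R : (Fin n → ℝ) → Matrix (Fin m) (Fin m) ℝ)
    (hR : ∀ x, (R x).PosDef)
    (γ : ℝ) (hγ : 0 ≤ γ)
    (Q : (Fin n → ℝ) → ℝ)
    (hQ : ∀ x, Q x = γ * (x ⬝ᵥ (P *ᵥ x)) - 2 * (x ⬝ᵥ (P *ᵥ f x))
        + x ⬝ᵥ (P *ᵥ (g x *ᵥ ((R x)⁻¹ *ᵥ ((g x)ᵀ *ᵥ (P *ᵥ x))))))
    (L : ℝ) (hL : 0 < L)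
    (hLip : ∀ x : Fin n → ℝ,
        Real.sqrt (f x ⬝ᵥ (P *ᵥ f x)) ≤ L * Real.sqrt (x ⬝ᵥ (P *ᵥ x)))
    (hγL : 2 * L ≤ γ) :
    (∀ x : Fin n → ℝ,
        (γ - 2 * L) * (x ⬝ᵥ (P *ᵥ x)) ≤ Q x ∧ 0 ≤ (γ - 2 * L) * (x ⬝ᵥ (P *ᵥ x))) ∧
    Q 0 = 0 := by
  constructor
  · intro x
    have ha : 0 ≤ x ⬝ᵥ (P *ᵥ x) := psd_dot_nonneg hP.posSemidef x
    have hb : x ⬝ᵥ (P *ᵥ f x) ≤ L * (x ⬝ᵥ (P *ᵥ x)) := by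
      calc x ⬝ᵥ (P *ᵥ f x)
          ≤ Real.sqrt (x ⬝ᵥ (P *ᵥ x)) * Real.sqrt (f x ⬝ᵥ (P *ᵥ f x)) := cs hP x (f x)
        _ ≤ Real.sqrt (x ⬝ᵥ (P *ᵥ x)) * (L * Real.sqrt (x ⬝ᵥ (P *ᵥ x))) := by
            exact mul_le_mul_of_nonneg_left (hLip x) (Real.sqrt_nonneg _)
        _ = L * (Real.sqrt (x ⬝ᵥ (P *ᵥ x)) * Real.sqrt (x ⬝ᵥ (P *ᵥ x))) := by ring
        _ = L * (x ⬝ᵥ (P *ᵥ x)) := by rw [Real.mul_self_sqrt ha]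
    have hthird : 0 ≤ x ⬝ᵥ (P *ᵥ (g x *ᵥ ((R x)⁻¹ *ᵥ ((g x)ᵀ *ᵥ (P *ᵥ x))))) := by
      have h1 : x ⬝ᵥ (P *ᵥ (g x *ᵥ ((R x)⁻¹ *ᵥ ((g x)ᵀ *ᵥ (P *ᵥ x)))))
          = ((g x)ᵀ *ᵥ (P *ᵥ x)) ⬝ᵥ ((R x)⁻¹ *ᵥ ((g x)ᵀ *ᵥ (P *ᵥ x))) := by
        have hPt : Pᵀ = P := by
          have := hP.isHermitian.eq
          simpa [Matrix.conjTranspose_eq_transpose_of_trivial] using this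
        rw [dotProduct_mulVec x P, ← mulVec_transpose, hPt,
          dotProduct_mulVec _ (g x), ← mulVec_transpose]
      rw [h1]
      exact psd_dot_nonneg (hR x).inv.posSemidef _
    rw [hQ x]
    constructor
    · nlinarith
    · exact mul_nonneg (by linarith) ha
  · rw [hQ 0]; simp
end

section
/- Let P ∈ ℝ^{n×n} be symmetric positive definite with ⟨a,b⟩_P = aᵀPb, let m = 1 so g : ℝⁿ → ℝⁿ, and let R : ℝⁿ → ℝ with R(x) > 0. Define the closed-loop vector field F(x) = f(x) − R(x)⁻¹⟨g(x),x⟩_P g(x). Then for every x, 2⟨F(x),x⟩_P = 2[⟨f(x),x⟩_P − R(x)⁻¹⟨g(x),x⟩_P²]; moreover, if x ≠ 0 and either (⟨g(x),x⟩_P = 0 and ⟨f(x),x⟩_P < 0) or (⟨g(x),x⟩_P ≠ 0 and R(x)⟨f(x),x⟩_P < ⟨g(x),x⟩_P²), then ⟨F(x),x⟩_P < 0, so the squared P-norm ‖x(t)‖_P² = x(t)ᵀPx(t) is strictly decreasing along any solution of ẋ = F(x) passing through such x. -/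
open Matrix

lemma ip_sub_smul {n : ℕ} (P : Matrix (Fin n) (Fin n) ℝ) (a b x : Fin n → ℝ) (c : ℝ) :
    (a - c • b) ⬝ᵥ (P *ᵥ x) = a ⬝ᵥ (P *ᵥ x) - c * (b ⬝ᵥ (P *ᵥ x)) := by
  simp [sub_dotProduct, smul_dotProduct, smul_eq_mul]

/-- Second part of Theorem 3 made precise: for the closed-loop vector field
`F x = f x - R(x)⁻¹⟨g x, x⟩_P g x`, one has
`2⟨F x, x⟩_P = 2[⟨f x, x⟩_P - R(x)⁻¹⟨g x, x⟩_P²]`; if `x ≠ 0` and either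
(`⟨g x, x⟩_P = 0` and `⟨f x, x⟩_P < 0`) or (`⟨g x, x⟩_P ≠ 0` and
`R(x)⟨f x, x⟩_P < ⟨g x, x⟩_P²`), then `⟨F x, x⟩_P < 0`, so the squared
`P`-norm strictly decreases along any solution of `ẋ = F(x)` through such `x`
(its derivative `2⟨F(ξ t), ξ t⟩_P` is negative). -/
theorem continuous_closed_loop_norm_decrease
    {n : ℕ} (P : Matrix (Fin n) (Fin n) ℝ) (hP : P.PosDef)
    (f g : (Fin n → ℝ) → (Fin n → ℝ))
    (R : (Fin n → ℝ) → ℝ) (hR : ∀ x, 0 < R x)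
    (ip : (Fin n → ℝ) → (Fin n → ℝ) → ℝ)
    (hip : ∀ a b, ip a b = a ⬝ᵥ (P *ᵥ b))
    (F : (Fin n → ℝ) → (Fin n → ℝ))
    (hF : ∀ x, F x = f x - ((R x)⁻¹ * ip (g x) x) • g x) :
    (∀ x : Fin n → ℝ,
        2 * ip (F x) x = 2 * (ip (f x) x - (R x)⁻¹ * (ip (g x) x) ^ 2)) ∧
    (∀ x : Fin n → ℝ, x ≠ 0 →
        ((ip (g x) x = 0 ∧ ip (f x) x < 0) ∨
          (ip (g x) x ≠ 0 ∧ R x * ip (f x) x < (ip (g x) x) ^ 2)) →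
        ip (F x) x < 0) ∧
    (∀ (ξ : ℝ → (Fin n → ℝ)) (t : ℝ), HasDerivAt ξ (F (ξ t)) t →
        HasDerivAt (fun s => ξ s ⬝ᵥ (P *ᵥ ξ s)) (2 * ip (F (ξ t)) (ξ t)) t) := by
  have key : ∀ x, ip (F x) x = ip (f x) x - (R x)⁻¹ * (ip (g x) x) ^ 2 := by
    intro x
    rw [hip, hF, ip_sub_smul, ← hip, ← hip]
    ring
  have hsym : ∀ a b : Fin n → ℝ, a ⬝ᵥ (P *ᵥ b) = b ⬝ᵥ (P *ᵥ a) := by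
    intro a b
    have hPt : Pᵀ = P := by
      have := hP.1.eq
      simpa [Matrix.conjTranspose_eq_transpose_of_trivial] using this
    rw [dotProduct_mulVec, ← mulVec_transpose, hPt]
    exact dotProduct_comm _ b
  refine ⟨fun x => by rw [key], ?_, ?_⟩
  · intro x hx hcase
    rw [key]
    rcases hcase with ⟨hg0, hf⟩ | ⟨hg, hlt⟩
    · simpa [hg0] using hf
    · have hRx := hR x
      have : ip (f x) x < (R x)⁻¹ * (ip (g x) x) ^ 2 := by
        rw [inv_mul_eq_div, lt_div_iff₀ hRx]
        nlinarith [hlt]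
      linarith [this]
  · intro ξ t hξ
    have hcoord : ∀ i, HasDerivAt (fun s => ξ s i) (F (ξ t) i) t :=
      fun i => (hasDerivAt_pi.mp hξ) i
    have hsum : HasDerivAt (fun s => ∑ i, ξ s i * ∑ j, P i j * ξ s j)
        (∑ i, (F (ξ t) i * (∑ j, P i j * ξ t j) +
          ξ t i * ∑ j, P i j * F (ξ t) j)) t := by
      apply HasDerivAt.fun_sum
      intro i _
      exact (hcoord i).mul (HasDerivAt.fun_sum (fun j _ => (hcoord j).const_mul (P i j)))
    have heq : (fun s => ∑ i, ξ s i * ∑ j, P i j * ξ s j)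
        = fun s => ξ s ⬝ᵥ (P *ᵥ ξ s) := by
      funext s
      simp [dotProduct, mulVec, Finset.mul_sum]
    have hval : (∑ i, (F (ξ t) i * (∑ j, P i j * ξ t j) +
          ξ t i * ∑ j, P i j * F (ξ t) j)) = 2 * ip (F (ξ t)) (ξ t) := by
      rw [Finset.sum_add_distrib]
      have h1 : (∑ i, F (ξ t) i * ∑ j, P i j * ξ t j) = F (ξ t) ⬝ᵥ (P *ᵥ ξ t) := by
        simp [dotProduct, mulVec, Finset.mul_sum]
      have h2 : (∑ i, ξ t i * ∑ j, P i j * F (ξ t) j) = ξ t ⬝ᵥ (P *ᵥ F (ξ t)) := by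
        simp [dotProduct, mulVec, Finset.mul_sum]
      rw [h1, h2, hsym (ξ t), hip]
      ring
    rw [heq, hval] at hsum
    exact hsum
end
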